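/- arXiv:1610.04399 — 2 statements merged into one kernel-verified Lean document; each statement's English description precedes it below -/
import Mathlib

section
/- Let n ≥ 3 and let ξ ∈ ℝⁿ satisfy: for every l ∈ {1,…,n−1}, Σ_{k=1, k≠l}^{n−1} ξ_k² > 0. Then for every pair j, k ∈ {1,…,n} there exist real numbers α, β and unit vectors μ₁, μ₂ ∈ ℝⁿ such that ξ·μ₁ = ξ·μ₂ = μ₁·μ₂ = 0, the last coordinate of μ₂ is zero (i.e. μ₂* = μ₂), μ₁ = −(ξ_n/|ξ|) e(1) + (|ξ'|/|ξ|) e_n, and ξ_j e_k − ξ_k e_j = α μ₁ + β μ₂. -/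
open MeasureTheory Filter Complex
open scoped ENNReal RealInnerProductSpace

noncomputable section

/-- The last index of `Fin n` (i.e. the `n`-th coordinate). -/
def lastIdx (n : ℕ) (hn : 0 < n) : Fin n := ⟨n - 1, Nat.sub_lt hn one_pos⟩

/-- `|ξ'|`, the Euclidean norm of the first `n-1` coordinates of `ξ`. -/
def xiPrimeNorm (n : ℕ) (ξ : EuclideanSpace ℝ (Fin n)) : ℝ :=
  Real.sqrt (∑ i ∈ Finset.univ.filter (fun i : Fin n => (i : ℕ) < n - 1), ξ i ^ 2)

/-- `e(1) := (ξ'/|ξ'|, 0)`. -/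
def eOneVec (n : ℕ) (ξ : EuclideanSpace ℝ (Fin n)) : EuclideanSpace ℝ (Fin n) :=
  WithLp.toLp 2 (fun i => if (i : ℕ) < n - 1 then ξ i / xiPrimeNorm n ξ else 0)

/-- `μ₁ := -(ξ_n/|ξ|) e(1) + (|ξ'|/|ξ|) e_n`. -/
def muOneVec (n : ℕ) (hn : 0 < n) (ξ : EuclideanSpace ℝ (Fin n)) :
    EuclideanSpace ℝ (Fin n) :=
  (-(ξ (lastIdx n hn) / ‖ξ‖)) • eOneVec n ξ +
    (xiPrimeNorm n ξ / ‖ξ‖) • EuclideanSpace.single (lastIdx n hn) (1 : ℝ)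

theorem stmt1 (n : ℕ) (hn : 3 ≤ n) (ξ : EuclideanSpace ℝ (Fin n))
    (hξ : ∀ l : Fin n, (l : ℕ) < n - 1 →
      0 < ∑ k ∈ Finset.univ.filter (fun k : Fin n => (k : ℕ) < n - 1 ∧ k ≠ l), ξ k ^ 2) :
    ∀ j k : Fin n, ∃ (α β : ℝ) (μ₁ μ₂ : EuclideanSpace ℝ (Fin n)),
      ‖μ₁‖ = 1 ∧ ‖μ₂‖ = 1 ∧
      ⟪ξ, μ₁⟫ = 0 ∧ ⟪ξ, μ₂⟫ = 0 ∧ ⟪μ₁, μ₂⟫ = 0 ∧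
      μ₂ (lastIdx n (by omega)) = 0 ∧
      μ₁ = muOneVec n (by omega) ξ ∧
      ξ j • EuclideanSpace.single k (1 : ℝ) - ξ k • EuclideanSpace.single j (1 : ℝ) =
        α • μ₁ + β • μ₂ := by
  intro j k
  have hn0 : 0 < n := by omega
  set N : Fin n := lastIdx n hn0 with hNdef
  have hNval : (N : ℕ) = n - 1 := rfl
  set s := xiPrimeNorm n ξ with hsdef
  have hs2 : s ^ 2 = ∑ i ∈ Finset.univ.filter (fun i : Fin n => (i : ℕ) < n - 1), ξ i ^ 2 := by
    rw [hsdef, xiPrimeNorm]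
    exact Real.sq_sqrt (Finset.sum_nonneg fun i _ => sq_nonneg _)
  -- l0 and b
  have hl0lt : ((⟨0, hn0⟩ : Fin n) : ℕ) < n - 1 := by simp; omega
  have h0 := hξ ⟨0, hn0⟩ hl0lt
  have hsumpos : 0 < ∑ i ∈ Finset.univ.filter (fun i : Fin n => (i : ℕ) < n - 1), ξ i ^ 2 := by
    refine lt_of_lt_of_le h0 (Finset.sum_le_sum_of_subset_of_nonneg ?_ fun i _ _ => sq_nonneg _)
    intro x hx
    simp only [Finset.mem_filter, Finset.mem_univ, true_and] at hx ⊢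
    exact hx.1
  have hs_pos : 0 < s := by
    rw [hsdef, xiPrimeNorm]
    exact Real.sqrt_pos.mpr hsumpos
  have hne_iff : ∀ i : Fin n, (i : ℕ) < n - 1 ↔ i ≠ N := by
    intro i
    have h1 := i.isLt
    constructor
    · intro h h2
      rw [h2] at h
      rw [hNval] at h
      omega
    · intro h
      rcases Nat.lt_or_ge (i : ℕ) (n - 1) with h' | h'
      · exact h'
      · exact absurd (Fin.ext (show (i : ℕ) = (N : ℕ) by rw [hNval]; omega)) h
  have hNnotlt : ¬ ((N : ℕ) < n - 1) := by rw [hNval]; omega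
  have hTc : Finset.univ.filter (fun i : Fin n => ¬ (i : ℕ) < n - 1) = {N} := by
    ext i
    simp only [Finset.mem_filter, Finset.mem_univ, true_and, Finset.mem_singleton]
    constructor
    · intro h
      by_contra h2
      exact h ((hne_iff i).mpr h2)
    · intro h
      subst h
      exact hNnotlt
  have hsplit : ∀ f : Fin n → ℝ, ∑ i, f i =
      (∑ i ∈ Finset.univ.filter (fun i : Fin n => (i : ℕ) < n - 1), f i) + f N := by
    intro f
    rw [← Finset.sum_filter_add_sum_filter_not Finset.univ (fun i : Fin n => (i : ℕ) < n - 1) f,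
      hTc, Finset.sum_singleton]
  have hnormsq : ‖ξ‖ ^ 2 = s ^ 2 + ξ N ^ 2 := by
    have h1 : ‖ξ‖ ^ 2 = ∑ i, ξ i ^ 2 := by
      rw [EuclideanSpace.norm_eq, Real.sq_sqrt (Finset.sum_nonneg fun i _ => sq_nonneg _)]
      simp [Real.norm_eq_abs, sq_abs]
    rw [h1, hsplit (fun i => ξ i ^ 2), hs2]
  have hnorm_pos : 0 < ‖ξ‖ := by
    nlinarith [norm_nonneg ξ, hs_pos, sq_nonneg (ξ N)]
  have hsne : s ≠ 0 := hs_pos.ne'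
  have hξne : ‖ξ‖ ≠ 0 := hnorm_pos.ne'
  set μ1 := muOneVec n hn0 ξ with hμ1def
  have hμ1 : ∀ i : Fin n, μ1 i =
      if (i : ℕ) < n - 1 then -(ξ N * ξ i) / (‖ξ‖ * s) else s / ‖ξ‖ := by
    intro i
    rw [hμ1def]
    simp only [muOneVec, PiLp.add_apply, PiLp.smul_apply, smul_eq_mul, eOneVec,
      EuclideanSpace.single_apply, ← hNdef, ← hsdef]
    by_cases h : (i : ℕ) < n - 1
    · rw [if_pos h, if_pos h, if_neg ((hne_iff i).mp h)]
      ring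
    · have hiN : i = N := by
        by_contra h2
        exact h ((hne_iff i).mpr h2)
      rw [if_neg h, if_neg h, if_pos hiN]
      ring
  have hμ1N : μ1 N = s / ‖ξ‖ := by rw [hμ1 N, if_neg hNnotlt]
  have hμ1lt : ∀ i : Fin n, (i : ℕ) < n - 1 → μ1 i = -(ξ N * ξ i) / (‖ξ‖ * s) := by
    intro i hi
    rw [hμ1 i, if_pos hi]
  have hinner : ∀ x y : EuclideanSpace ℝ (Fin n), ⟪x, y⟫ = ∑ i, x i * y i := by
    intro x y
    simp [PiLp.inner_apply, RCLike.inner_apply]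
    exact Finset.sum_congr rfl fun i _ => mul_comm _ _
  -- ⟪ξ, μ1⟫ = 0
  have hξμ1 : ⟪ξ, μ1⟫ = 0 := by
    rw [hinner, hsplit (fun i => ξ i * μ1 i)]
    have h1 : ∑ i ∈ Finset.univ.filter (fun i : Fin n => (i : ℕ) < n - 1), ξ i * μ1 i =
        (-(ξ N) / (‖ξ‖ * s)) * ∑ i ∈ Finset.univ.filter (fun i : Fin n => (i : ℕ) < n - 1), ξ i ^ 2 := by
      rw [Finset.mul_sum]
      refine Finset.sum_congr rfl fun i hi => ?_
      have hi' : (i : ℕ) < n - 1 := by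
        simpa only [Finset.mem_filter, Finset.mem_univ, true_and] using hi
      rw [hμ1lt i hi']
      ring
    rw [h1, ← hs2, hμ1N]
    field_simp
    ring
  -- ‖μ1‖ = 1
  have hμ1inner : ⟪μ1, μ1⟫ = 1 := by
    rw [hinner, hsplit (fun i => μ1 i * μ1 i)]
    have h1 : ∑ i ∈ Finset.univ.filter (fun i : Fin n => (i : ℕ) < n - 1), μ1 i * μ1 i =
        (ξ N ^ 2 / (‖ξ‖ * s) ^ 2) * ∑ i ∈ Finset.univ.filter (fun i : Fin n => (i : ℕ) < n - 1), ξ i ^ 2 := by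
      rw [Finset.mul_sum]
      refine Finset.sum_congr rfl fun i hi => ?_
      have hi' : (i : ℕ) < n - 1 := by
        simpa only [Finset.mem_filter, Finset.mem_univ, true_and] using hi
      rw [hμ1lt i hi']
      ring
    rw [h1, ← hs2, hμ1N]
    field_simp
    linear_combination (-1 : ℝ) * hnormsq
  have hμ1norm : ‖μ1‖ = 1 := by
    have h1 : ‖μ1‖ ^ 2 = 1 := by rw [← real_inner_self_eq_norm_sq]; exact hμ1inner
    nlinarith [norm_nonneg μ1]
  -- v, c, w
  set v : EuclideanSpace ℝ (Fin n) :=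
    ξ j • EuclideanSpace.single k (1 : ℝ) - ξ k • EuclideanSpace.single j (1 : ℝ) with hvdef
  set c : ℝ := ξ j * μ1 k - ξ k * μ1 j with hcdef
  have hvξ : ⟪ξ, v⟫ = 0 := by
    rw [hvdef]
    simp only [inner_sub_right, real_inner_smul_right, EuclideanSpace.inner_single_right,
      starRingEnd_apply, star_trivial]
    ring
  have hvμ1 : ⟪v, μ1⟫ = c := by
    rw [hvdef, hcdef]
    simp only [inner_sub_left, real_inner_smul_left, EuclideanSpace.inner_single_left,
      starRingEnd_apply, star_trivial, one_mul]
  have hvN : v N * ‖ξ‖ = c * s := by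
    have hvNval : v N = ξ j * (if N = k then 1 else 0) - ξ k * (if N = j then 1 else 0) := by
      rw [hvdef]
      simp [EuclideanSpace.single_apply]
    rcases eq_or_ne k N with hk | hk <;> rcases eq_or_ne j N with hj | hj
    · subst hk; subst hj
      rw [hvNval, hcdef]
      simp
    · rw [hvNval, hcdef, hk, hμ1N, hμ1lt j ((hne_iff j).mpr hj), if_pos rfl,
        if_neg (fun h => hj h.symm)]
      field_simp
      linear_combination (ξ j) * hnormsq
    · rw [hvNval, hcdef, hj, hμ1N, hμ1lt k ((hne_iff k).mpr hk), if_pos rfl,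
        if_neg (fun h => hk h.symm)]
      field_simp
      linear_combination (-(ξ k)) * hnormsq
    · rw [hvNval, hcdef, hμ1lt j ((hne_iff j).mpr hj), hμ1lt k ((hne_iff k).mpr hk),
        if_neg (fun h => hk h.symm), if_neg (fun h => hj h.symm)]
      ring
  set w : EuclideanSpace ℝ (Fin n) := v - c • μ1 with hwdef
  have hwξ : ⟪ξ, w⟫ = 0 := by
    rw [hwdef, inner_sub_right, real_inner_smul_right, hvξ, hξμ1]
    ring
  have hwμ1 : ⟪μ1, w⟫ = 0 := by
    have hμ1v : ⟪μ1, v⟫ = c := by rw [real_inner_comm]; exact hvμ1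
    rw [hwdef, inner_sub_right, real_inner_smul_right, hμ1v, hμ1inner]
    ring
  have hwN : w N = 0 := by
    have h1 : w N = v N - c * μ1 N := by
      rw [hwdef]
      simp [PiLp.sub_apply, PiLp.smul_apply]
    rw [h1, hμ1N]
    have h2 : v N = c * s / ‖ξ‖ := by
      field_simp at hvN ⊢
      linarith [hvN]
    rw [h2]
    ring
  by_cases hw : w = 0
  · -- degenerate case: v = c • μ1; pick explicit μ₂
    obtain ⟨b, hbmem, hbne⟩ := Finset.exists_ne_zero_of_sum_ne_zero h0.ne'
    simp only [Finset.mem_filter, Finset.mem_univ, true_and] at hbmem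
    obtain ⟨hblt, hbne0⟩ := hbmem
    have hξb : ξ b ≠ 0 := fun h => hbne (by rw [h]; ring)
    set a : Fin n := ⟨0, hn0⟩ with hadef
    have halt : (a : ℕ) < n - 1 := hl0lt
    have hab : a ≠ b := fun h => hbne0 h.symm
    have hrpos : 0 < ξ a ^ 2 + ξ b ^ 2 := by positivity
    set r : ℝ := Real.sqrt (ξ a ^ 2 + ξ b ^ 2) with hrdef
    have hr : 0 < r := Real.sqrt_pos.mpr hrpos
    set u : EuclideanSpace ℝ (Fin n) :=
      ξ b • EuclideanSpace.single a (1 : ℝ) - ξ a • EuclideanSpace.single b (1 : ℝ) with hudef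
    have huu : ⟪u, u⟫ = ξ a ^ 2 + ξ b ^ 2 := by
      rw [hudef]
      simp only [inner_sub_left, inner_sub_right, real_inner_smul_left, real_inner_smul_right,
        EuclideanSpace.inner_single_left, EuclideanSpace.inner_single_right,
        PiLp.smul_apply, PiLp.sub_apply, smul_eq_mul, EuclideanSpace.single_apply,
        starRingEnd_apply, star_trivial]
      simp only [if_pos rfl, if_neg hab, if_neg hab.symm, if_true]
      ring
    have hunorm : ‖u‖ = r := by
      rw [norm_eq_sqrt_real_inner, huu, hrdef]
    have hμ2norm : ‖r⁻¹ • u‖ = 1 := by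
      rw [norm_smul, hunorm, Real.norm_eq_abs, abs_of_pos (inv_pos.mpr hr),
        inv_mul_cancel₀ hr.ne']
    have hξu : ⟪ξ, u⟫ = 0 := by
      rw [hudef]
      simp only [inner_sub_right, real_inner_smul_right, EuclideanSpace.inner_single_right,
        starRingEnd_apply, star_trivial]
      ring
    have hμ1u : ⟪μ1, u⟫ = 0 := by
      rw [hudef]
      simp only [inner_sub_right, real_inner_smul_right, EuclideanSpace.inner_single_right,
        starRingEnd_apply, star_trivial]
      rw [hμ1lt a halt, hμ1lt b hblt]
      ring
    have huN : u N = 0 := by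
      rw [hudef]
      simp only [PiLp.sub_apply, PiLp.smul_apply, smul_eq_mul, EuclideanSpace.single_apply]
      have hNa : N ≠ a := fun h => hNnotlt (by rw [h]; exact halt)
      have hNb : N ≠ b := fun h => hNnotlt (by rw [h]; exact hblt)
      rw [if_neg hNa, if_neg hNb]
      ring
    refine ⟨c, 0, μ1, r⁻¹ • u, hμ1norm, hμ2norm, hξμ1, ?_, ?_, ?_, ?_, ?_⟩
    · rw [real_inner_smul_right, hξu]; ring
    · rw [real_inner_smul_right, hμ1u]; ring
    · show (r⁻¹ • u) N = 0
      rw [PiLp.smul_apply, huN]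
      simp
    · exact hμ1def
    · rw [zero_smul, add_zero]
      exact sub_eq_zero.mp hw
  · -- generic case
    have hwne : ‖w‖ ≠ 0 := norm_ne_zero_iff.mpr hw
    refine ⟨c, ‖w‖, μ1, ‖w‖⁻¹ • w, hμ1norm, ?_, hξμ1, ?_, ?_, ?_, ?_, ?_⟩
    · rw [norm_smul, norm_inv, norm_norm, inv_mul_cancel₀ hwne]
    · rw [real_inner_smul_right, hwξ]; ring
    · rw [real_inner_smul_right, hwμ1]; ring
    · show (‖w‖⁻¹ • w) N = 0
      rw [PiLp.smul_apply, hwN]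
      simp
    · exact hμ1def
    · rw [smul_smul, mul_inv_cancel₀ hwne, one_smul]
      show v = c • μ1 + w
      rw [hwdef]
      abel
end
end

section
/- Assume f ∈ L¹(ℝⁿ; ℂ) and there exist σ > 0, C₀ > 0 and s ∈ (0,1) such that ‖f(·+y) − f(·)‖_{L¹(ℝⁿ)} ≤ C₀ |y|^s whenever |y| < σ. Then there exist positive constants K and ε₀, depending only on ‖f‖_{L¹}, n, σ and s, such that for every 0 < ε < ε₀ and every ξ ∈ ℝⁿ, |f̂(ξ)| ≤ C₀ K (e^{−π ε² |ξ|²} + ε^s). -/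
open MeasureTheory Filter Complex
open scoped ENNReal RealInnerProductSpace FourierTransform

noncomputable section

theorem stmt4 (n : ℕ) (f : EuclideanSpace ℝ (Fin n) → ℂ)
    (hf : Integrable f volume)
    (σ C₀ s : ℝ) (hσ : 0 < σ) (hC₀ : 0 < C₀) (hs0 : 0 < s) (hs1 : s < 1)
    (hmod : ∀ y : EuclideanSpace ℝ (Fin n), ‖y‖ < σ →
      (∫ x, ‖f (x + y) - f x‖) ≤ C₀ * ‖y‖ ^ s) :
    ∃ K ε₀ : ℝ, 0 < K ∧ 0 < ε₀ ∧
      ∀ ε : ℝ, 0 < ε → ε < ε₀ → ∀ ξ : EuclideanSpace ℝ (Fin n),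
        ‖𝓕 f ξ‖ ≤ C₀ * K * (Real.exp (-Real.pi * ε ^ 2 * ‖ξ‖ ^ 2) + ε ^ s) := by
  set I : ℝ := ∫ x, ‖f x‖ with hI
  have hI0 : 0 ≤ I := integral_nonneg fun x => norm_nonneg _
  obtain ⟨K, hK⟩ : ∃ K : ℝ, K = I * Real.exp (Real.pi / 4) / C₀ + 1 := ⟨_, rfl⟩
  refine ⟨K, σ, ?_, hσ, ?_⟩
  · rw [hK]; positivity
  intro ε hε hεσ ξ
  have hK1 : 1 ≤ K := by rw [hK]; exact le_add_of_nonneg_left (by positivity)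
  have hεs : 0 ≤ ε ^ s := Real.rpow_nonneg hε.le s
  have hbasic : ‖𝓕 f ξ‖ ≤ I := by
    exact VectorFourier.norm_fourierIntegral_le_integral_norm _ _ _ _ _
  rcases le_or_gt (ε * ‖ξ‖) (1/2) with hcase | hcase
  · -- low frequency
    have h1 : ε ^ 2 * ‖ξ‖ ^ 2 ≤ 1/4 := by
      have := mul_le_mul hcase hcase (by positivity) (by norm_num)
      nlinarith [sq_nonneg ε, sq_nonneg ‖ξ‖]
    have h2 : Real.exp (-(Real.pi/4)) ≤ Real.exp (-Real.pi * ε ^ 2 * ‖ξ‖ ^ 2) := by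
      apply Real.exp_le_exp.2
      nlinarith [Real.pi_pos]
    have h3 : ‖𝓕 f ξ‖ ≤ C₀ * K * Real.exp (-Real.pi * ε ^ 2 * ‖ξ‖ ^ 2) := by
      calc ‖𝓕 f ξ‖ ≤ I := hbasic
        _ = I * Real.exp (Real.pi/4) * Real.exp (-(Real.pi/4)) := by
            rw [mul_assoc, ← Real.exp_add]; simp
        _ ≤ C₀ * K * Real.exp (-Real.pi * ε ^ 2 * ‖ξ‖ ^ 2) := by
            apply mul_le_mul _ h2 (Real.exp_nonneg _) (by positivity)
            rw [hK, mul_add, mul_one, mul_div_cancel₀ _ hC₀.ne']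
            linarith
    have hterm : 0 ≤ C₀ * K * ε ^ s := by positivity
    have hdist : C₀ * K * (Real.exp (-Real.pi * ε ^ 2 * ‖ξ‖ ^ 2) + ε ^ s)
        = C₀ * K * Real.exp (-Real.pi * ε ^ 2 * ‖ξ‖ ^ 2) + C₀ * K * ε ^ s := by ring
    rw [hdist]
    linarith
  · -- high frequency
    have hξ0 : ξ ≠ 0 := by
      intro h; rw [h] at hcase; simp at hcase; linarith
    have hξn : 0 < ‖ξ‖ := norm_pos_iff.2 hξ0
    set y : EuclideanSpace ℝ (Fin n) := (1 / (2 * ‖ξ‖ ^ 2) : ℝ) • ξ with hy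
    have hyn : ‖y‖ = 1 / (2 * ‖ξ‖) := by
      rw [hy, norm_smul, Real.norm_eq_abs, abs_of_pos (by positivity)]
      field_simp
    have hyε : ‖y‖ < ε := by
      rw [hyn, div_lt_iff₀ (by positivity)]
      nlinarith
    have hyσ : ‖y‖ < σ := hyε.trans hεσ
    have key : ‖𝓕 f ξ‖ ≤ (C₀ / 2) * ‖y‖ ^ s := by
      have heq := fourierIntegral_eq_half_sub_half_period_translate (f := f) hξ0 hf
      have : 𝓕 f ξ = (1 / (2 : ℂ)) • ∫ v, 𝐞 (-⟪v, ξ⟫) • (f v - f (v + y)) := heq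
      rw [this, norm_smul]
      have hnorm : ‖∫ v, 𝐞 (-⟪v, ξ⟫) • (f v - f (v + y))‖ ≤ ∫ v, ‖f v - f (v + y)‖ := by
        refine (norm_integral_le_integral_norm _).trans ?_
        apply le_of_eq
        congr 1
        ext v
        exact Circle.norm_smul _ _
      have heq2 : (∫ v, ‖f v - f (v + y)‖) = ∫ v, ‖f (v + y) - f v‖ := by
        congr 1; ext v; rw [norm_sub_rev]
      have hfin : (∫ v, ‖f v - f (v + y)‖) ≤ C₀ * ‖y‖ ^ s := by
        rw [heq2]; exact hmod y hyσ
      have h12 : ‖(1 / (2 : ℂ))‖ = 1/2 := by norm_num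
      rw [h12]
      calc (1/2) * ‖∫ v, 𝐞 (-⟪v, ξ⟫) • (f v - f (v + y))‖
          ≤ (1/2) * (C₀ * ‖y‖ ^ s) := by
            apply mul_le_mul_of_nonneg_left (hnorm.trans hfin) (by norm_num)
        _ = (C₀ / 2) * ‖y‖ ^ s := by ring
    have hys : ‖y‖ ^ s ≤ ε ^ s :=
      Real.rpow_le_rpow (norm_nonneg _) hyε.le hs0.le
    have : ‖𝓕 f ξ‖ ≤ (C₀ / 2) * ε ^ s :=
      key.trans (mul_le_mul_of_nonneg_left hys (by positivity))
    have hCK : (C₀ / 2) * ε ^ s ≤ C₀ * K * ε ^ s := by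
      apply mul_le_mul_of_nonneg_right _ hεs
      have := mul_le_mul_of_nonneg_left hK1 hC₀.le
      linarith
    have hexp : 0 ≤ C₀ * K * Real.exp (-Real.pi * ε ^ 2 * ‖ξ‖ ^ 2) := by positivity
    have hdist : C₀ * K * (Real.exp (-Real.pi * ε ^ 2 * ‖ξ‖ ^ 2) + ε ^ s)
        = C₀ * K * Real.exp (-Real.pi * ε ^ 2 * ‖ξ‖ ^ 2) + C₀ * K * ε ^ s := by ring
    rw [hdist]
    linarith
end
end
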